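/- In the category of sets with a binary relation, the pullback of a regular epimorphism along any morphism is a regular epimorphism. -/

import Mathlib

open CategoryTheory Limits Function

/-- A set equipped with a binary relation. -/
structure BRel where
  carrier : Type
  rel : carrier → carrier → Prop

/-- The category of sets with a binary relation and relation-preserving functions. -/
instance : Category BRel where
  Hom X Y := {f : X.carrier → Y.carrier // ∀ a b, X.rel a b → Y.rel (f a) (f b)}
  id X := ⟨id, fun _ _ h => h⟩
  comp f g := ⟨g.1 ∘ f.1, fun a b h => g.2 _ _ (f.2 a b h)⟩
  id_comp _ := rfl
  comp_id _ := rfl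
  assoc _ _ _ := rfl

lemma BRel.hom_ext {X Y : BRel} {f g : X ⟶ Y} (h : f.1 = g.1) : f = g := Subtype.ext h

lemma BRel.comp_apply {X Y Z : BRel} (f : X ⟶ Y) (g : Y ⟶ Z) (x : X.carrier) :
    (f ≫ g).1 x = g.1 (f.1 x) := rfl

/-- A regular epi in BRel is surjective. -/
lemma BRel.surjective_of_epi {X Z : BRel} (q : X ⟶ Z) [Epi q] : Surjective q.1 := by
  intro z
  by_contra hz
  push_neg at hz
  let T : BRel := ⟨Prop, fun _ _ => True⟩
  let f1 : Z ⟶ T := ⟨fun w => ∃ x, q.1 x = w, fun _ _ _ => trivial⟩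
  let f2 : Z ⟶ T := ⟨fun _ => True, fun _ _ _ => trivial⟩
  have : q ≫ f1 = q ≫ f2 := by
    apply BRel.hom_ext
    funext x
    simp only [f1, f2]
    show (∃ y, q.1 y = q.1 x) = True
    simp only [eq_iff_iff, iff_true]
    exact ⟨x, rfl⟩
  have hf : f1 = f2 := (cancel_epi q).mp this
  have : (∃ x, q.1 x = z) = True := congrFun (congrArg Subtype.val hf) z
  exact hz (this ▸ trivial).choose (this ▸ trivial).choose_spec

/-- A regular epi in BRel lifts related pairs. -/
lemma BRel.rel_lift_of_regularEpi {X Z : BRel} (q : X ⟶ Z) (re : RegularEpi q)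
    {s t : Z.carrier} (hst : Z.rel s t) :
    ∃ a b, X.rel a b ∧ q.1 a = s ∧ q.1 b = t := by
  have hsurj : Surjective q.1 := @BRel.surjective_of_epi _ _ q (RegularEpi.epi q re)
  let Z' : BRel := ⟨Z.carrier, fun s t => ∃ a b, X.rel a b ∧ q.1 a = s ∧ q.1 b = t⟩
  let q' : X ⟶ Z' := ⟨q.1, fun a b h => ⟨a, b, h, rfl, rfl⟩⟩
  have hw : re.left ≫ q' = re.right ≫ q' := by
    apply BRel.hom_ext
    show q.1 ∘ re.left.1 = q.1 ∘ re.right.1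
    exact congrArg Subtype.val re.w
  let k : Z ⟶ Z' := Cofork.IsColimit.desc re.isColimit q' hw
  have hk : q ≫ k = q' := Cofork.IsColimit.π_desc' re.isColimit q' hw
  have hkfun : ∀ z : Z.carrier, k.1 z = z := by
    intro z
    obtain ⟨x, rfl⟩ := hsurj z
    exact congrFun (congrArg Subtype.val hk) x
  have := k.2 s t hst
  rwa [hkfun, hkfun] at this

/-- A surjective, relation-lifting morphism is a regular epi. -/
noncomputable def BRel.regularEpiOf {P Y : BRel} (f : P ⟶ Y) (hsurj : Surjective f.1)
    (hlift : ∀ s t, Y.rel s t → ∃ a b, P.rel a b ∧ f.1 a = s ∧ f.1 b = t) :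
    RegularEpi f := by
  let W : BRel := ⟨{p : P.carrier × P.carrier // f.1 p.1 = f.1 p.2}, fun _ _ => False⟩
  let l : W ⟶ P := ⟨fun p => p.1.1, fun _ _ h => h.elim⟩
  let r : W ⟶ P := ⟨fun p => p.1.2, fun _ _ h => h.elim⟩
  have hw : l ≫ f = r ≫ f := by
    apply BRel.hom_ext
    funext p
    exact p.2
  refine ⟨W, l, r, hw, ?_⟩
  apply Cofork.IsColimit.mk _ (fun s => ?_) (fun s => ?_) (fun s m hm => ?_)
  · -- desc
    refine ⟨fun y => s.π.1 ((hsurj y).choose), fun a b hab => ?_⟩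
    obtain ⟨a', b', hab', ha', hb'⟩ := hlift a b hab
    have key : ∀ (p p' : P.carrier), f.1 p = f.1 p' → s.π.1 p = s.π.1 p' := by
      intro p p' hpp'
      have := congrFun (congrArg Subtype.val s.condition) (⟨(p, p'), hpp'⟩ : W.carrier)
      exact this
    have ha : s.π.1 ((hsurj a).choose) = s.π.1 a' :=
      key _ _ (by rw [(hsurj a).choose_spec, ha'])
    have hb : s.π.1 ((hsurj b).choose) = s.π.1 b' :=
      key _ _ (by rw [(hsurj b).choose_spec, hb'])
    show s.pt.rel (s.π.1 ((hsurj a).choose)) (s.π.1 ((hsurj b).choose))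
    rw [ha, hb]
    exact s.π.2 _ _ hab'
  · -- fac
    apply BRel.hom_ext
    funext p
    show s.π.1 ((hsurj (f.1 p)).choose) = s.π.1 p
    have := congrFun (congrArg Subtype.val s.condition)
      (⟨((hsurj (f.1 p)).choose, p), (hsurj (f.1 p)).choose_spec⟩ : W.carrier)
    exact this
  · -- uniq
    apply BRel.hom_ext
    funext y
    obtain ⟨p, rfl⟩ := hsurj y
    have h1 := congrFun (congrArg Subtype.val hm) p
    have := congrFun (congrArg Subtype.val s.condition)
      (⟨((hsurj (f.1 p)).choose, p), (hsurj (f.1 p)).choose_spec⟩ : W.carrier)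
    exact h1.trans this.symm

/-- In sets with a binary relation, the pullback of a regular epimorphism along any
morphism is a regular epimorphism. -/
theorem pullback_regularEpi (X Y Z P : BRel) (q : X ⟶ Z) (g : Y ⟶ Z) (hq : RegularEpi q)
    (fst : P ⟶ X) (snd : P ⟶ Y) (h : IsPullback fst snd q g) :
    Nonempty (RegularEpi snd) := by
  have hqsurj : Surjective q.1 := @BRel.surjective_of_epi _ _ q (RegularEpi.epi q hq)
  -- surjectivity of snd
  have hsurj : Surjective snd.1 := by
    intro y
    obtain ⟨x, hx⟩ := hqsurj (g.1 y)
    let A : BRel := ⟨PUnit, fun _ _ => False⟩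
    let u : A ⟶ X := ⟨fun _ => x, fun _ _ hf => hf.elim⟩
    let v : A ⟶ Y := ⟨fun _ => y, fun _ _ hf => hf.elim⟩
    have huv : u ≫ q = v ≫ g := by
      apply BRel.hom_ext
      funext _
      exact hx.trans rfl
    let lft := h.lift u v huv
    refine ⟨lft.1 PUnit.unit, ?_⟩
    exact congrFun (congrArg Subtype.val (h.lift_snd u v huv)) PUnit.unit
  -- relation lifting for snd
  have hlift : ∀ s t, Y.rel s t → ∃ a b, P.rel a b ∧ snd.1 a = s ∧ snd.1 b = t := by
    intro s t hst
    obtain ⟨a, b, hab, ha, hb⟩ := BRel.rel_lift_of_regularEpi q hq (g.2 s t hst)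
    let A : BRel := ⟨Bool, fun i j => i = false ∧ j = true⟩
    let u : A ⟶ X := ⟨fun i => if i then b else a, fun i j hij => by
      rw [hij.1, hij.2]; simpa using hab⟩
    let v : A ⟶ Y := ⟨fun i => if i then t else s, fun i j hij => by
      rw [hij.1, hij.2]; simpa using hst⟩
    have huv : u ≫ q = v ≫ g := by
      apply BRel.hom_ext
      funext i
      cases i <;> simp [u, v, BRel.comp_apply, ha, hb]
    let lft := h.lift u v huv
    have hs := congrFun (congrArg Subtype.val (h.lift_snd u v huv))
    refine ⟨lft.1 false, lft.1 true, lft.2 false true ⟨rfl, rfl⟩, ?_, ?_⟩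
    · exact hs false
    · exact hs true
  exact ⟨BRel.regularEpiOf snd hsurj hlift⟩
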